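/- arXiv:2412.12172 — 3 statements merged into one kernel-verified Lean document; each statement's English description precedes it below -/
import Mathlib

section
/- For z_0 ∈ D with z_0 ≠ 0, let β_{z_0}(z) = ((z_0 − z)/(1 − conj(z_0) z))·(|z_0|/z_0). Then for every r with 0 ≤ r < 1 and every z with |z| ≤ r, one has |1 − β_{z_0}(z)| ≤ ((1+r)/(1−r))·(1 − |z_0|). -/
/-- Estimate for Blaschke factors: if `z₀ ∈ D`, `z₀ ≠ 0`, `|z| ≤ r < 1`, then
`|1 − β_{z₀}(z)| ≤ ((1+r)/(1−r))·(1 − |z₀|)`. -/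
theorem blaschke_factor_estimate (z₀ : ℂ) (hz₀ : z₀ ∈ Metric.ball (0 : ℂ) 1)
    (hz₀ne : z₀ ≠ 0) (r : ℝ) (hr0 : 0 ≤ r) (hr1 : r < 1) (z : ℂ)
    (hz : ‖z‖ ≤ r) :
    ‖1 - (z₀ - z) / (1 - (starRingEnd ℂ) z₀ * z) * (((‖z₀‖ : ℝ) : ℂ) / z₀)‖ ≤
      (1 + r) / (1 - r) * (1 - ‖z₀‖) := by
  set a := ‖z₀‖ with ha
  have ha0 : 0 < a := norm_pos_iff.mpr hz₀ne
  have ha1 : a < 1 := by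
    have := Metric.mem_ball.mp hz₀
    simpa [Complex.dist_eq] using this
  have habs : ‖(starRingEnd ℂ) z₀ * z‖ ≤ a * r := by
    rw [norm_mul, Complex.norm_conj]
    exact mul_le_mul_of_nonneg_left hz ha0.le
  have habs1 : ‖(starRingEnd ℂ) z₀ * z‖ ≤ r := by
    calc ‖(starRingEnd ℂ) z₀ * z‖ ≤ a * r := habs
    _ ≤ 1 * r := by nlinarith
    _ = r := one_mul r
  have hne : (1 : ℂ) - (starRingEnd ℂ) z₀ * z ≠ 0 := by
    intro h
    have h1 : (1 : ℂ) = (starRingEnd ℂ) z₀ * z := sub_eq_zero.mp h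
    have := congrArg norm h1
    simp at this
    nlinarith [norm_nonneg z, this]
  have hsq : z₀ * (starRingEnd ℂ) z₀ = ((a : ℂ)) ^ 2 := by
    rw [Complex.mul_conj]
    norm_cast
    exact (Complex.normSq_eq_norm_sq z₀)
  have key : 1 - (z₀ - z) / (1 - (starRingEnd ℂ) z₀ * z) * ((a : ℂ) / z₀)
      = (1 - (a : ℂ)) * (z₀ + (a : ℂ) * z) / (z₀ * (1 - (starRingEnd ℂ) z₀ * z)) := by
    field_simp [show (1 : ℂ) - z * (starRingEnd ℂ) z₀ ≠ 0 by rwa [mul_comm]]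
    linear_combination (-z) * hsq
  rw [key, norm_div, norm_mul, norm_mul]
  have h1a : ‖1 - (a : ℂ)‖ = 1 - a := by
    rw [show (1 - (a : ℂ)) = ((1 - a : ℝ) : ℂ) by push_cast; ring, Complex.norm_real, Real.norm_eq_abs]
    rw [abs_of_nonneg (by linarith)]
  have hnum : ‖z₀ + (a : ℂ) * z‖ ≤ a * (1 + r) := by
    calc ‖z₀ + (a : ℂ) * z‖ ≤ a + ‖(a : ℂ) * z‖ :=
      norm_add_le _ _
    _ ≤ a + a * r := by
        rw [norm_mul, Complex.norm_real, Real.norm_eq_abs, abs_of_nonneg ha0.le]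
        nlinarith
    _ = a * (1 + r) := by ring
  have hden : 1 - r ≤ ‖1 - (starRingEnd ℂ) z₀ * z‖ := by
    have := norm_sub_norm_le (1 : ℂ) ((starRingEnd ℂ) z₀ * z)
    simp only [norm_one, map_one] at this
    linarith
  rw [h1a]
  calc (1 - a) * ‖z₀ + (a : ℂ) * z‖ /
        (‖z₀‖ * ‖1 - (starRingEnd ℂ) z₀ * z‖)
      ≤ (1 - a) * (a * (1 + r)) / (a * (1 - r)) :=
        div_le_div₀ (mul_nonneg (by linarith) (by positivity))
          (mul_le_mul_of_nonneg_left hnum (by linarith))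
          (mul_pos ha0 (by linarith))
          (by rw [ha]; exact mul_le_mul_of_nonneg_left hden ha0.le)
    _ = (1 + r) / (1 - r) * (1 - a) := by
        have h2 : (1 : ℝ) - r ≠ 0 := by linarith
        field_simp [ha0.ne']
end

section
/- Let A : D → M_n(ℂ) be analytic and contractive (‖A(z)‖ ≤ 1 for all z in the open unit disk D). If A(z_0) is unitary for some z_0 ∈ D, then A is constant on D. -/
open scoped Matrix.Norms.L2Operator

/-- A contractive analytic matrix-valued function on the unit disk which is unitary at
some interior point is constant. -/
theorem contractive_unitary_at_point_constant (n : ℕ) (A : ℂ → Matrix (Fin n) (Fin n) ℂ)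
    (hA : ∀ i j : Fin n, DifferentiableOn ℂ (fun z => A z i j) (Metric.ball (0 : ℂ) 1))
    (hcontr : ∀ z ∈ Metric.ball (0 : ℂ) 1, ‖A z‖ ≤ 1)
    (z₀ : ℂ) (hz₀ : z₀ ∈ Metric.ball (0 : ℂ) 1)
    (hunit : A z₀ ∈ Matrix.unitaryGroup (Fin n) ℂ) :
    ∀ z ∈ Metric.ball (0 : ℂ) 1, A z = A z₀ := by
  intro z hz
  ext k i
  -- the i-th column of A z, as a vector in Euclidean space
  set col : ℂ → EuclideanSpace ℂ (Fin n) :=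
    fun w => (EuclideanSpace.equiv (Fin n) ℂ).symm (Matrix.mulVec (A w) (Pi.single i 1)) with hcol
  have hcol_apply : ∀ w k', col w k' = A w k' i := by
    intro w k'
    simp [hcol, Matrix.mulVec_single_one, EuclideanSpace.equiv]
  -- norm of each column is at most 1 on the ball
  have hcol_le : ∀ w ∈ Metric.ball (0 : ℂ) 1, ‖col w‖ ≤ 1 := by
    intro w hw
    have h1 : ‖((EuclideanSpace.equiv (Fin n) ℂ).symm (Pi.single i 1) :
        EuclideanSpace ℂ (Fin n))‖ = 1 := by
      show ‖EuclideanSpace.single i (1 : ℂ)‖ = 1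
      simp [EuclideanSpace.norm_single]
    calc ‖col w‖ ≤ ‖A w‖ * ‖((EuclideanSpace.equiv (Fin n) ℂ).symm (Pi.single i 1) :
          EuclideanSpace ℂ (Fin n))‖ := by
            have := Matrix.l2_opNorm_mulVec (A w)
              ((EuclideanSpace.equiv (Fin n) ℂ).symm (Pi.single i 1))
            exact this
      _ ≤ 1 := by rw [h1, mul_one]; exact hcontr w hw
  -- the analytic function f w = ⟪col z₀, col w⟫
  set f : ℂ → ℂ := fun w => ∑ k', (starRingEnd ℂ) (A z₀ k' i) * A w k' i with hf
  have hf_inner : ∀ w, f w = @inner ℂ _ _ (col z₀) (col w) := by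
    intro w
    rw [hf]
    simp only [PiLp.inner_apply, RCLike.inner_apply, hcol_apply]
    exact Finset.sum_congr rfl (fun _ _ => mul_comm _ _)
  have hfz₀ : f z₀ = 1 := by
    have h := hunit.1
    have := congrFun (congrFun h i) i
    simpa [Matrix.mul_apply, Matrix.conjTranspose_apply, Matrix.one_apply, hf,
      mul_comm] using this
  have hfd : DifferentiableOn ℂ f (Metric.ball (0 : ℂ) 1) := by
    apply DifferentiableOn.fun_sum
    intro k' _
    exact (hA k' i).const_mul _
  have hmax : IsMaxOn (norm ∘ f) (Metric.ball (0 : ℂ) 1) z₀ := by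
    intro w hw
    simp only [Function.comp_apply, Set.mem_setOf_eq, hfz₀, norm_one]
    calc ‖f w‖ = ‖@inner ℂ _ _ (col z₀) (col w)‖ := by rw [hf_inner]
      _ ≤ ‖col z₀‖ * ‖col w‖ := norm_inner_le_norm _ _
      _ ≤ 1 * 1 := by
          exact mul_le_mul (hcol_le z₀ hz₀) (hcol_le w hw) (norm_nonneg _)
            (by linarith [hcol_le z₀ hz₀, norm_nonneg (col z₀)])
      _ = 1 := one_mul 1
  have heq := Complex.eqOn_of_isPreconnected_of_isMaxOn_norm
    (convex_ball (0:ℂ) 1).isPreconnected Metric.isOpen_ball hfd hz₀ hmax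
  have hfz : f z = 1 := by simpa [hfz₀] using heq hz
  -- conclude col z = col z₀
  have hn₀ : ‖col z₀‖ = 1 := by
    have h : (inner ℂ (col z₀) (col z₀) : ℂ) = 1 := (hf_inner z₀).symm.trans hfz₀
    have h2' : ‖col z₀‖ ^ 2 = 1 := by
      rw [← inner_self_eq_norm_sq (𝕜 := ℂ), h]
      simp
    nlinarith [norm_nonneg (col z₀)]
  have hnz : ‖col z‖ = 1 := by
    have hle := hcol_le z hz
    have hge : (1:ℝ) ≤ ‖col z‖ := by
      have : ‖@inner ℂ _ _ (col z₀) (col z)‖ ≤ ‖col z₀‖ * ‖col z‖ := norm_inner_le_norm _ _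
      rw [← hf_inner, hfz, hn₀, one_mul] at this
      simpa using this
    linarith
  have : col z₀ = col z := by
    rw [← inner_eq_one_iff_of_norm_eq_one (𝕜 := ℂ) hn₀ hnz, ← hf_inner, hfz]
  have h5 := congrFun (congrArg WithLp.ofLp this) k
  rw [← hcol_apply z k, ← hcol_apply z₀ k]
  exact h5.symm
end

section
/- Let (f_k)_k ⊂ BV([a,b]) have total variations uniformly bounded by C and converge pointwise to f on [a,b]. Then f ∈ BV([a,b]) and for every continuous φ : [a,b] → ℝ, the Riemann–Stieltjes integrals converge: lim_{k→∞} ∫_a^b φ df_k = ∫_a^b φ df. -/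
open Filter

/-- `J` is the Riemann–Stieltjes integral `∫_a^b φ df`: the Riemann–Stieltjes sums converge
to `J` as the mesh of the tagged partition tends to `0`. -/
def IsRSIntegralR (φ f : ℝ → ℝ) (a b : ℝ) (J : ℝ) : Prop :=
  ∀ ε > (0 : ℝ), ∃ δ > (0 : ℝ), ∀ (m : ℕ) (t ξ : ℕ → ℝ), 0 < m →
    t 0 = a → t m = b →
    (∀ i < m, t i ≤ t (i + 1)) → (∀ i < m, t (i + 1) - t i < δ) →
    (∀ i < m, ξ i ∈ Set.Icc (t i) (t (i + 1))) →
    |(∑ i ∈ Finset.range m, φ (ξ i) * (f (t (i + 1)) - f (t i))) - J| < ε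

namespace HellyAux

structure Part (a b : ℝ) (m : ℕ) (t : ℕ → ℝ) : Prop where
  pos : 0 < m
  left : t 0 = a
  right : t m = b
  mono : ∀ i < m, t i ≤ t (i + 1)

lemma steps_mono {β : Type*} [Preorder β] {u : ℕ → β} {m : ℕ} (h : ∀ i < m, u i ≤ u (i + 1)) :
    ∀ i j, i ≤ j → j ≤ m → u i ≤ u j := by
  intro i j hij hjm
  induction j with
  | zero => obtain rfl : i = 0 := Nat.le_zero.mp hij; exact le_rfl
  | succ j ih =>
    rcases Nat.eq_or_lt_of_le hij with rfl | h'
    · exact le_rfl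
    · exact (ih (Nat.lt_succ_iff.mp h') (Nat.le_of_succ_le hjm)).trans
        (h j (Nat.lt_of_succ_le hjm))

lemma Part.mono' {a b m t} (P : Part a b m t) : ∀ i j, i ≤ j → j ≤ m → t i ≤ t j :=
  steps_mono P.mono

lemma Part.mem {a b m t} (P : Part a b m t) {i : ℕ} (hi : i ≤ m) : t i ∈ Set.Icc a b :=
  ⟨P.left ▸ P.mono' 0 i (Nat.zero_le _) hi, P.right ▸ P.mono' i m hi le_rfl⟩

/-- Variation bound on a partition from `eVariationOn`. -/
lemma sum_abs_le (f : ℝ → ℝ) {a b C : ℝ}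
    (hvar : eVariationOn f (Set.Icc a b) ≤ ENNReal.ofReal C)
    {m : ℕ} {t : ℕ → ℝ} (P : Part a b m t) :
    ∑ i ∈ Finset.range m, |f (t (i + 1)) - f (t i)| ≤ (ENNReal.ofReal C).toReal := by
  have h1 : (ENNReal.ofReal (∑ i ∈ Finset.range m, |f (t (i + 1)) - f (t i)|)) =
      ∑ i ∈ Finset.range m, edist (f (t (i + 1))) (f (t i)) := by
    rw [ENNReal.ofReal_sum_of_nonneg (fun i _ => abs_nonneg _)]
    exact Finset.sum_congr rfl fun i _ => by rw [edist_dist, Real.dist_eq]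
  have h2 : (ENNReal.ofReal (∑ i ∈ Finset.range m, |f (t (i + 1)) - f (t i)|)) ≤
      ENNReal.ofReal C := by
    rw [h1]
    refine le_trans ?_ hvar
    exact eVariationOn.sum_le_of_monotoneOn_Iic (f := f)
      (fun i hi j hj hij => P.mono' i j hij hj) (fun i hi => P.mem hi)
  calc ∑ i ∈ Finset.range m, |f (t (i + 1)) - f (t i)|
      = (ENNReal.ofReal (∑ i ∈ Finset.range m, |f (t (i + 1)) - f (t i)|)).toReal :=
        (ENNReal.toReal_ofReal (Finset.sum_nonneg fun i _ => abs_nonneg _)).symm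
    _ ≤ (ENNReal.ofReal C).toReal := ENNReal.toReal_mono ENNReal.ofReal_ne_top h2

/-- Decompose a `range` sum along a monotone reindexing. -/
lemma sum_range_decomp (F : ℕ → ℝ) (k : ℕ → ℕ) (m : ℕ) (hk : ∀ i < m, k i ≤ k (i + 1)) :
    ∑ i ∈ Finset.range m, ∑ j ∈ Finset.Ico (k i) (k (i + 1)), F j
      = ∑ j ∈ Finset.Ico (k 0) (k m), F j := by
  induction m with
  | zero => simp
  | succ m ih =>
    rw [Finset.sum_range_succ, ih (fun i hi => hk i (hi.trans m.lt_succ_self)),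
      Finset.sum_Ico_consecutive]
    · exact steps_mono hk 0 m (Nat.zero_le _) (Nat.le_succ _)
    · exact hk m m.lt_succ_self

lemma telescope (f : ℝ → ℝ) (s : ℕ → ℝ) (p q : ℕ) (hpq : p ≤ q) :
    ∑ j ∈ Finset.Ico p q, (f (s (j + 1)) - f (s j)) = f (s q) - f (s p) := by
  rw [Finset.sum_Ico_eq_sub _ hpq, Finset.sum_range_sub (fun j => f (s j)),
    Finset.sum_range_sub (fun j => f (s j))]
  ring

noncomputable def RS (φ f : ℝ → ℝ) (m : ℕ) (t ξ : ℕ → ℝ) : ℝ :=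
  ∑ i ∈ Finset.range m, φ (ξ i) * (f (t (i + 1)) - f (t i))

lemma exists_block {k : ℕ → ℕ} {m j : ℕ} (hj : j < k m) (h0 : k 0 ≤ j) :
    ∃ i < m, k i ≤ j ∧ j < k (i + 1) := by
  induction m with
  | zero => omega
  | succ m ih =>
    by_cases h : j < k m
    · obtain ⟨i, hi, h1, h2⟩ := ih h
      exact ⟨i, hi.trans m.lt_succ_self, h1, h2⟩
    · exact ⟨m, m.lt_succ_self, not_lt.mp h, hj⟩

/-- Refinement comparison: the RS sum over a refinement with left-endpoint tags differs from
the RS sum over the original partition by at most `ε' * (variation sum over refinement)`. -/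
lemma RS_refine_abs (φ f : ℝ → ℝ) (m : ℕ) (t ξ : ℕ → ℝ) (n : ℕ) (s : ℕ → ℝ) (k : ℕ → ℕ)
    (hk0 : k 0 = 0) (hkm : k m = n) (hkstep : ∀ i < m, k i ≤ k (i + 1))
    (hsk : ∀ i ≤ m, s (k i) = t i) (ε' : ℝ) (hε' : 0 ≤ ε')
    (hosc : ∀ i < m, ∀ j, k i ≤ j → j < k (i + 1) → |φ (s j) - φ (ξ i)| ≤ ε') :
    |RS φ f n s s - RS φ f m t ξ|
      ≤ ε' * ∑ j ∈ Finset.range n, |f (s (j + 1)) - f (s j)| := by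
  have hQ : RS φ f n s s
      = ∑ i ∈ Finset.range m, ∑ j ∈ Finset.Ico (k i) (k (i + 1)),
          φ (s j) * (f (s (j + 1)) - f (s j)) := by
    rw [sum_range_decomp _ k m hkstep, hk0, hkm, RS, Finset.range_eq_Ico]
  have hP : RS φ f m t ξ
      = ∑ i ∈ Finset.range m, ∑ j ∈ Finset.Ico (k i) (k (i + 1)),
          φ (ξ i) * (f (s (j + 1)) - f (s j)) := by
    rw [RS]
    refine Finset.sum_congr rfl fun i hi => ?_
    rw [Finset.mem_range] at hi
    rw [← Finset.mul_sum, telescope f s _ _ (hkstep i hi), hsk (i + 1) hi,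
      hsk i hi.le]
  rw [hQ, hP, ← Finset.sum_sub_distrib]
  calc |∑ i ∈ Finset.range m, (∑ j ∈ Finset.Ico (k i) (k (i + 1)),
          φ (s j) * (f (s (j + 1)) - f (s j))
        - ∑ j ∈ Finset.Ico (k i) (k (i + 1)), φ (ξ i) * (f (s (j + 1)) - f (s j)))|
      ≤ ∑ i ∈ Finset.range m, ∑ j ∈ Finset.Ico (k i) (k (i + 1)),
          ε' * |f (s (j + 1)) - f (s j)| := by
        refine (Finset.abs_sum_le_sum_abs _ _).trans (Finset.sum_le_sum fun i hi => ?_)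
        rw [Finset.mem_range] at hi
        rw [← Finset.sum_sub_distrib]
        refine (Finset.abs_sum_le_sum_abs _ _).trans (Finset.sum_le_sum fun j hj => ?_)
        rw [Finset.mem_Ico] at hj
        rw [← sub_mul, abs_mul]
        exact mul_le_mul_of_nonneg_right (hosc i hi j hj.1 hj.2) (abs_nonneg _)
    _ = ε' * ∑ j ∈ Finset.range n, |f (s (j + 1)) - f (s j)| := by
        simp only [← Finset.mul_sum]
        congr 1
        rw [sum_range_decomp _ k m hkstep, hk0, hkm, Finset.range_eq_Ico]


lemma exists_refine_two {a b : ℝ} (hab : a < b) {m1 m2 : ℕ} {t1 t2 : ℕ → ℝ}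
    (P1 : Part a b m1 t1) (P2 : Part a b m2 t2) :
    ∃ (n : ℕ) (s : ℕ → ℝ) (k1 k2 : ℕ → ℕ),
      Part a b n s ∧
      (k1 0 = 0 ∧ k1 m1 = n ∧ (∀ i < m1, k1 i ≤ k1 (i + 1)) ∧ ∀ i ≤ m1, s (k1 i) = t1 i) ∧
      (k2 0 = 0 ∧ k2 m2 = n ∧ (∀ i < m2, k2 i ≤ k2 (i + 1)) ∧ ∀ i ≤ m2, s (k2 i) = t2 i) := by
  classical
  set T : Finset ℝ := ((Finset.range (m1 + 1)).image t1) ∪ ((Finset.range (m2 + 1)).image t2)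
    with hT
  have hmemT : ∀ x ∈ T, x ∈ Set.Icc a b := by
    intro x hx
    simp only [hT, Finset.mem_union, Finset.mem_image, Finset.mem_range] at hx
    rcases hx with ⟨i, hi, rfl⟩ | ⟨i, hi, rfl⟩
    · exact P1.mem (Nat.lt_succ_iff.mp hi)
    · exact P2.mem (Nat.lt_succ_iff.mp hi)
  have ht1T : ∀ i ≤ m1, t1 i ∈ T := fun i hi => by
    simp only [hT, Finset.mem_union, Finset.mem_image, Finset.mem_range]
    exact Or.inl ⟨i, Nat.lt_succ_of_le hi, rfl⟩
  have ht2T : ∀ i ≤ m2, t2 i ∈ T := fun i hi => by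
    simp only [hT, Finset.mem_union, Finset.mem_image, Finset.mem_range]
    exact Or.inr ⟨i, Nat.lt_succ_of_le hi, rfl⟩
  have haT : a ∈ T := P1.left ▸ ht1T 0 (Nat.zero_le _)
  have hbT : b ∈ T := P1.right ▸ ht1T m1 le_rfl
  have hc2 : 1 < T.card := Finset.one_lt_card.mpr ⟨a, haT, b, hbT, hab.ne⟩
  have hc : 0 < T.card := by omega
  let e := T.orderIsoOfFin rfl
  have hmemE : ∀ j : Fin T.card, (e j : ℝ) ∈ Set.Icc a b := fun j => hmemT _ (e j).2
  -- least and greatest elements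
  have e0 : (e ⟨0, hc⟩ : ℝ) = a := by
    refine le_antisymm ?_ (hmemE _).1
    have h1 : (⟨0, hc⟩ : Fin T.card) ≤ e.symm ⟨a, haT⟩ := Fin.mk_le_of_le_val (Nat.zero_le _)
    have := e.monotone h1
    rw [OrderIso.apply_symm_apply] at this
    exact this
  have elast : (e ⟨T.card - 1, by omega⟩ : ℝ) = b := by
    refine le_antisymm (hmemE _).2 ?_
    have h1 : e.symm ⟨b, hbT⟩ ≤ (⟨T.card - 1, by omega⟩ : Fin T.card) := by
      have h2 := (e.symm ⟨b, hbT⟩).isLt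
      exact Fin.le_def.mpr (by simpa using Nat.le_sub_one_of_lt h2)
    have := e.monotone h1
    rw [OrderIso.apply_symm_apply] at this
    exact this
  set s : ℕ → ℝ := fun j => if h : j < T.card then (e ⟨j, h⟩ : ℝ) else b with hs
  have hs_mono : ∀ j j', j ≤ j' → j' < T.card → s j ≤ s j' := by
    intro j j' hjj' hj'
    rw [hs]
    simp only [dif_pos hj', dif_pos (lt_of_le_of_lt hjj' hj')]
    exact e.monotone (Fin.mk_le_mk.mpr hjj')
  -- refinement index maps
  have key : ∀ (m : ℕ) (t : ℕ → ℝ), Part a b m t → (∀ i ≤ m, t i ∈ T) →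
      ∃ k : ℕ → ℕ, k 0 = 0 ∧ k m = T.card - 1 ∧ (∀ i < m, k i ≤ k (i + 1)) ∧
        ∀ i ≤ m, s (k i) = t i := by
    intro m t P htT
    refine ⟨fun i => if h : i ≤ m then (e.symm ⟨t i, htT i h⟩ : Fin T.card).val else T.card - 1,
      ?_, ?_, ?_, ?_⟩
    · simp only [dif_pos (Nat.zero_le m)]
      have h3 : (⟨t 0, htT 0 (Nat.zero_le m)⟩ : T) = ⟨a, haT⟩ := Subtype.ext P.left
      have h4 : e.symm ⟨a, haT⟩ = ⟨0, hc⟩ := e.symm_apply_eq.mpr (Subtype.ext e0.symm)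
      rw [h3, h4]
    · simp only [dif_pos (le_refl m)]
      have h3 : (⟨t m, htT m le_rfl⟩ : T) = ⟨b, hbT⟩ := Subtype.ext P.right
      have h4 : e.symm ⟨b, hbT⟩ = ⟨T.card - 1, by omega⟩ :=
        e.symm_apply_eq.mpr (Subtype.ext elast.symm)
      rw [h3, h4]
    · intro i hi
      simp only [dif_pos hi.le, dif_pos (Nat.succ_le_of_lt hi)]
      exact e.symm.monotone (Subtype.mk_le_mk.mpr (P.mono i hi))
    · intro i hi
      simp only [dif_pos hi]
      rw [hs]
      simp only [Fin.is_lt, dif_pos, Fin.eta]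
      rw [OrderIso.apply_symm_apply]
  obtain ⟨k1, hk1⟩ := key m1 t1 P1 ht1T
  obtain ⟨k2, hk2⟩ := key m2 t2 P2 ht2T
  refine ⟨T.card - 1, s, k1, k2, ⟨by omega, ?_, ?_, ?_⟩, hk1, hk2⟩
  · rw [hs]; simp only [dif_pos hc]; exact e0
  · rw [hs]; simp only [dif_pos (by omega : T.card - 1 < T.card)]; exact elast
  · intro j hj
    exact hs_mono j (j + 1) (Nat.le_succ j) (by omega)


lemma RS_refine_le (φ f : ℝ → ℝ) {a b : ℝ} {m : ℕ} {t : ℕ → ℝ} (ξ : ℕ → ℝ) (P : Part a b m t)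
    {n : ℕ} {s : ℕ → ℝ} (Q : Part a b n s) {k : ℕ → ℕ}
    (hk0 : k 0 = 0) (hkm : k m = n) (hkstep : ∀ i < m, k i ≤ k (i + 1))
    (hsk : ∀ i ≤ m, s (k i) = t i)
    {δ ε' C' : ℝ} (hε' : 0 ≤ ε')
    (hosc : ∀ x ∈ Set.Icc a b, ∀ y ∈ Set.Icc a b, |x - y| ≤ δ → |φ x - φ y| ≤ ε')
    (hmesh : ∀ i < m, t (i + 1) - t i < δ)
    (hξ : ∀ i < m, ξ i ∈ Set.Icc (t i) (t (i + 1)))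
    (hC : ∑ j ∈ Finset.range n, |f (s (j + 1)) - f (s j)| ≤ C') :
    |RS φ f n s s - RS φ f m t ξ| ≤ ε' * C' := by
  refine (RS_refine_abs φ f m t ξ n s k hk0 hkm hkstep hsk ε' hε' ?_).trans
    (mul_le_mul_of_nonneg_left hC hε')
  intro i hi j hji hjlt
  have hkin : k (i + 1) ≤ n := hkm ▸ steps_mono hkstep (i + 1) m hi le_rfl
  have hsj1 : s j ≤ t (i + 1) := by
    have := Q.mono' j (k (i + 1)) hjlt.le hkin
    rwa [hsk (i + 1) hi] at this
  have hsj0 : t i ≤ s j := by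
    have := Q.mono' (k i) j hji ((lt_of_lt_of_le hjlt hkin).le)
    rwa [hsk i hi.le] at this
  have hmem_sj : s j ∈ Set.Icc a b :=
    ⟨(P.mem hi.le).1.trans hsj0, hsj1.trans (P.mem hi).2⟩
  have hmem_ξ : ξ i ∈ Set.Icc a b :=
    ⟨(P.mem hi.le).1.trans (hξ i hi).1, (hξ i hi).2.trans (P.mem hi).2⟩
  refine hosc _ hmem_sj _ hmem_ξ ?_
  have h1 := (hξ i hi).1
  have h2 := (hξ i hi).2
  have h3 := hmesh i hi
  rw [abs_le]
  constructor <;> linarith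

/-- The mesh of a refinement is bounded by the mesh of the original partition. -/
lemma refine_mesh {a b : ℝ} {m : ℕ} {t : ℕ → ℝ} (P : Part a b m t)
    {n : ℕ} {s : ℕ → ℝ} (Q : Part a b n s) {k : ℕ → ℕ}
    (hk0 : k 0 = 0) (hkm : k m = n) (hkstep : ∀ i < m, k i ≤ k (i + 1))
    (hsk : ∀ i ≤ m, s (k i) = t i) {δ : ℝ} (hmesh : ∀ i < m, t (i + 1) - t i < δ) :
    ∀ j < n, s (j + 1) - s j < δ := by
  intro j hj
  obtain ⟨i, hi, h1, h2⟩ := exists_block (k := k) (m := m) (hkm ▸ hj) (le_of_eq_of_le hk0 (Nat.zero_le j))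
  have hkin : k (i + 1) ≤ n := hkm ▸ steps_mono hkstep (i + 1) m hi le_rfl
  have hs1 : s (j + 1) ≤ t (i + 1) := by
    have := Q.mono' (j + 1) (k (i + 1)) h2 hkin
    rwa [hsk (i + 1) hi] at this
  have hs0 : t i ≤ s j := by
    have := Q.mono' (k i) j h1 ((lt_of_lt_of_le h2 hkin).le)
    rwa [hsk i hi.le] at this
  have := hmesh i hi
  linarith

/-- Two tagged partitions with small mesh have close RS sums. -/
lemma RS_two (φ f : ℝ → ℝ) {a b : ℝ} (hab : a < b) {m1 m2 : ℕ} {t1 t2 : ℕ → ℝ}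
    (ξ1 ξ2 : ℕ → ℝ) (P1 : Part a b m1 t1) (P2 : Part a b m2 t2)
    {δ ε' C' : ℝ} (hε' : 0 ≤ ε')
    (hC : ∀ (n : ℕ) (s : ℕ → ℝ), Part a b n s →
      ∑ j ∈ Finset.range n, |f (s (j + 1)) - f (s j)| ≤ C')
    (hosc : ∀ x ∈ Set.Icc a b, ∀ y ∈ Set.Icc a b, |x - y| ≤ δ → |φ x - φ y| ≤ ε')
    (hmesh1 : ∀ i < m1, t1 (i + 1) - t1 i < δ)
    (hξ1 : ∀ i < m1, ξ1 i ∈ Set.Icc (t1 i) (t1 (i + 1)))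
    (hmesh2 : ∀ i < m2, t2 (i + 1) - t2 i < δ)
    (hξ2 : ∀ i < m2, ξ2 i ∈ Set.Icc (t2 i) (t2 (i + 1))) :
    |RS φ f m1 t1 ξ1 - RS φ f m2 t2 ξ2| ≤ 2 * (ε' * C') := by
  obtain ⟨n, s, k1, k2, Q, ⟨h10, h1m, h1s, h1e⟩, ⟨h20, h2m, h2s, h2e⟩⟩ :=
    exists_refine_two hab P1 P2
  have hCQ := hC n s Q
  have e1 := RS_refine_le φ f ξ1 P1 Q h10 h1m h1s h1e hε' hosc hmesh1 hξ1 hCQ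
  have e2 := RS_refine_le φ f ξ2 P2 Q h20 h2m h2s h2e hε' hosc hmesh2 hξ2 hCQ
  have h := abs_sub_le (RS φ f m1 t1 ξ1) (RS φ f n s s) (RS φ f m2 t2 ξ2)
  rw [abs_sub_comm (RS φ f m1 t1 ξ1) (RS φ f n s s)] at h
  calc |RS φ f m1 t1 ξ1 - RS φ f m2 t2 ξ2|
      ≤ |RS φ f n s s - RS φ f m1 t1 ξ1| + |RS φ f n s s - RS φ f m2 t2 ξ2| := h
    _ ≤ ε' * C' + ε' * C' := add_le_add e1 e2
    _ = 2 * (ε' * C') := by ring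

/-- Uniform partition of `[a,b]` into `N` pieces. -/
noncomputable def unif (a b : ℝ) (N : ℕ) (j : ℕ) : ℝ := a + j * ((b - a) / N)

lemma unif_step (a b : ℝ) (N : ℕ) (j : ℕ) :
    unif a b N (j + 1) - unif a b N j = (b - a) / N := by
  simp only [unif]
  push_cast
  ring

lemma unif_part {a b : ℝ} (hab : a ≤ b) {N : ℕ} (hN : 0 < N) : Part a b N (unif a b N) where
  pos := hN
  left := by simp [unif]
  right := by
    have : (N : ℝ) ≠ 0 := Nat.cast_ne_zero.mpr hN.ne'
    simp only [unif]
    field_simp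
    ring
  mono := fun i _ => by
    have h1 : 0 ≤ (b - a) / N := div_nonneg (by linarith) (Nat.cast_nonneg N)
    have := unif_step a b N i
    linarith

lemma exists_nat_div_lt {c δ : ℝ} (hδ : 0 < δ) : ∃ N : ℕ, c / (N + 1) < δ := by
  obtain ⟨N, hN⟩ := exists_nat_gt (c / δ)
  refine ⟨N, ?_⟩
  rw [div_lt_iff₀ (by positivity)]
  rcases le_or_gt c 0 with h | h
  · nlinarith
  · rw [div_lt_iff₀ hδ] at hN
    nlinarith

lemma C'_nonneg {a b : ℝ} (hab : a ≤ b) {f : ℝ → ℝ} {C' : ℝ}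
    (hC : ∀ (n : ℕ) (s : ℕ → ℝ), Part a b n s →
      ∑ j ∈ Finset.range n, |f (s (j + 1)) - f (s j)| ≤ C') : 0 ≤ C' := by
  have P : Part a b 1 (fun i => if i = 0 then a else b) :=
    ⟨Nat.one_pos, by simp, by simp, fun i hi => by
      interval_cases i
      simpa using hab⟩
  have := hC 1 _ P
  simp only [Finset.range_one, Finset.sum_singleton] at this
  exact (abs_nonneg _).trans this

lemma small_lt {ε C' : ℝ} (hε : 0 < ε) (hC : 0 ≤ C') :
    2 * (ε / (4 * (C' + 1)) * C') < ε := by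
  have h4 : (0:ℝ) < 4 * (C' + 1) := by linarith
  rw [div_mul_eq_mul_div, ← mul_div_assoc, div_lt_iff₀ h4]
  nlinarith

lemma RS_close_integral (φ f : ℝ → ℝ) {a b : ℝ} (hab : a < b) {m : ℕ} {t : ℕ → ℝ}
    (ξ : ℕ → ℝ) (P : Part a b m t) {δ ε' C' ε₀ : ℝ} (hε' : 0 ≤ ε') (hε₀ : 0 < ε₀)
    (hosc : ∀ x ∈ Set.Icc a b, ∀ y ∈ Set.Icc a b, |x - y| ≤ δ → |φ x - φ y| ≤ ε')
    (hmesh : ∀ i < m, t (i + 1) - t i < δ)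
    (hξ : ∀ i < m, ξ i ∈ Set.Icc (t i) (t (i + 1)))
    (hC : ∀ (n : ℕ) (s : ℕ → ℝ), Part a b n s →
      ∑ j ∈ Finset.range n, |f (s (j + 1)) - f (s j)| ≤ C')
    {I : ℝ} (hI : IsRSIntegralR φ f a b I) :
    |RS φ f m t ξ - I| ≤ ε' * C' + ε₀ := by
  obtain ⟨δk, hδk, hIk⟩ := hI ε₀ hε₀
  obtain ⟨N, hN⟩ := exists_nat_div_lt (c := b - a) hδk
  have PU : Part a b (N + 1) (unif a b (N + 1)) := unif_part hab.le N.succ_pos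
  obtain ⟨n, s, k1, k2, Q, ⟨h10, h1m, h1s, h1e⟩, ⟨h20, h2m, h2s, h2e⟩⟩ :=
    exists_refine_two hab P PU
  have hmeshU : ∀ i < N + 1, unif a b (N + 1) (i + 1) - unif a b (N + 1) i < δk := by
    intro i _
    rw [unif_step]
    push_cast
    exact hN
  have hmeshQ : ∀ j < n, s (j + 1) - s j < δk :=
    refine_mesh PU Q h20 h2m h2s h2e hmeshU
  have hQI : |RS φ f n s s - I| < ε₀ :=
    hIk n s s Q.pos Q.left Q.right Q.mono hmeshQ (fun j hj => ⟨le_rfl, Q.mono j hj⟩)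
  have hQP : |RS φ f n s s - RS φ f m t ξ| ≤ ε' * C' :=
    RS_refine_le φ f ξ P Q h10 h1m h1s h1e hε' hosc hmesh hξ (hC n s Q)
  calc |RS φ f m t ξ - I|
      ≤ |RS φ f m t ξ - RS φ f n s s| + |RS φ f n s s - I| := abs_sub_le _ _ _
    _ ≤ ε' * C' + ε₀ := add_le_add (by rwa [abs_sub_comm]) hQI.le

/-- Uniform continuity data from continuity on the compact interval. -/
lemma uc_of_continuousOn {a b : ℝ} {φ : ℝ → ℝ} (hφ : ContinuousOn φ (Set.Icc a b)) :
    ∀ ε > (0:ℝ), ∃ δ > (0:ℝ),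
      ∀ x ∈ Set.Icc a b, ∀ y ∈ Set.Icc a b, |x - y| ≤ δ → |φ x - φ y| ≤ ε := by
  intro ε hε
  have h := isCompact_Icc.uniformContinuousOn_of_continuous hφ
  rw [Metric.uniformContinuousOn_iff_le] at h
  obtain ⟨δ, hδ, H⟩ := h ε hε
  exact ⟨δ, hδ, fun x hx y hy hxy => by
    simpa [Real.dist_eq] using H x hx y hy (by rwa [Real.dist_eq])⟩

lemma exists_RS {a b : ℝ} (hab : a < b) (φ f : ℝ → ℝ) {C' : ℝ}
    (hC : ∀ (n : ℕ) (s : ℕ → ℝ), Part a b n s →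
      ∑ j ∈ Finset.range n, |f (s (j + 1)) - f (s j)| ≤ C')
    (hφ : ContinuousOn φ (Set.Icc a b)) :
    ∃ J : ℝ, IsRSIntegralR φ f a b J := by
  have hC0 : 0 ≤ C' := C'_nonneg hab.le hC
  set A : ℕ → ℝ := fun N => RS φ f (N + 1) (unif a b (N + 1)) (unif a b (N + 1)) with hA
  have hPU : ∀ N : ℕ, Part a b (N + 1) (unif a b (N + 1)) :=
    fun N => unif_part hab.le N.succ_pos
  have hmeshA : ∀ (N : ℕ) {δ : ℝ}, (b - a) / ((N : ℝ) + 1) < δ →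
      ∀ i < N + 1, unif a b (N + 1) (i + 1) - unif a b (N + 1) i < δ := by
    intro N δ h i _
    rw [unif_step]
    push_cast
    exact h
  have htagA : ∀ N : ℕ, ∀ i < N + 1,
      unif a b (N + 1) i ∈ Set.Icc (unif a b (N + 1) i) (unif a b (N + 1) (i + 1)) :=
    fun N i hi => ⟨le_rfl, (hPU N).mono i hi⟩
  have hdivmono : ∀ p N0 : ℕ, N0 ≤ p → (b - a) / ((p : ℝ) + 1) ≤ (b - a) / ((N0 : ℝ) + 1) := by
    intro p N0 h
    apply div_le_div_of_nonneg_left (by linarith) (by positivity)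
    have : (N0 : ℝ) ≤ (p : ℝ) := Nat.cast_le.mpr h
    linarith
  have hcauchy : CauchySeq A := by
    rw [Metric.cauchySeq_iff]
    intro ε hε
    set ε' := ε / (4 * (C' + 1)) with hε'def
    have hε' : 0 < ε' := by positivity
    obtain ⟨δ, hδ, hosc⟩ := uc_of_continuousOn hφ ε' hε'
    obtain ⟨N0, hN0⟩ := exists_nat_div_lt (c := b - a) hδ
    refine ⟨N0, fun p hp q hq => ?_⟩
    have h2 := RS_two φ f hab (unif a b (p + 1)) (unif a b (q + 1)) (hPU p) (hPU q) hε'.le hC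
      hosc (hmeshA p (lt_of_le_of_lt (hdivmono p N0 hp) hN0)) (htagA p)
      (hmeshA q (lt_of_le_of_lt (hdivmono q N0 hq) hN0)) (htagA q)
    rw [Real.dist_eq]
    exact lt_of_le_of_lt h2 (small_lt hε hC0)
  obtain ⟨J, hJ⟩ := cauchySeq_tendsto_of_complete hcauchy
  refine ⟨J, ?_⟩
  intro ε hε
  set ε' := ε / (4 * (C' + 1)) with hε'def
  have hε' : 0 < ε' := by positivity
  obtain ⟨δ, hδ, hosc⟩ := uc_of_continuousOn hφ ε' hε'
  refine ⟨δ, hδ, ?_⟩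
  intro m t ξ hm h0 hb hmono hmesh hξ
  have P : Part a b m t := ⟨hm, h0, hb, hmono⟩
  obtain ⟨N0, hN0⟩ := exists_nat_div_lt (c := b - a) hδ
  have key : ∀ N ≥ N0, |RS φ f m t ξ - A N| ≤ 2 * (ε' * C') := fun N hN =>
    RS_two φ f hab ξ (unif a b (N + 1)) P (hPU N) hε'.le hC hosc hmesh hξ
      (hmeshA N (lt_of_le_of_lt (hdivmono N N0 hN) hN0)) (htagA N)
  have hlim : Filter.Tendsto (fun N => |RS φ f m t ξ - A N|) Filter.atTop
      (nhds |RS φ f m t ξ - J|) := ((tendsto_const_nhds.sub hJ).abs)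
  have hle : |RS φ f m t ξ - J| ≤ 2 * (ε' * C') :=
    le_of_tendsto hlim (Filter.eventually_atTop.mpr ⟨N0, key⟩)
  exact lt_of_le_of_lt (by simpa [RS] using hle) (small_lt hε hC0)

end HellyAux

open HellyAux in
/-- Helly's convergence theorem (scalar version): if `(f_k)` have total variation uniformly
bounded by `C` and converge pointwise to `f` on `[a,b]`, then `f` has bounded variation and
`∫_a^b φ df_k → ∫_a^b φ df` for every continuous `φ`. -/
theorem helly_convergence_scalar (a b : ℝ) (hab : a ≤ b) (f : ℕ → ℝ → ℝ) (C : ℝ)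
    (hvar : ∀ k, eVariationOn (f k) (Set.Icc a b) ≤ ENNReal.ofReal C)
    (g : ℝ → ℝ)
    (hconv : ∀ t ∈ Set.Icc a b, Tendsto (fun k => f k t) atTop (nhds (g t))) :
    BoundedVariationOn g (Set.Icc a b) ∧
    ∀ φ : ℝ → ℝ, ContinuousOn φ (Set.Icc a b) →
      ∃ J : ℝ, IsRSIntegralR φ g a b J ∧
        ∀ I : ℕ → ℝ, (∀ k, IsRSIntegralR φ (f k) a b (I k)) →
          Tendsto I atTop (nhds J) := by
  -- Part 1: bounded variation of g
  have hgvar : eVariationOn g (Set.Icc a b) ≤ ENNReal.ofReal C := by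
    by_contra h
    push_neg at h
    obtain ⟨k, hk⟩ := (eVariationOn.lowerSemicontinuous_aux hconv h).exists
    exact absurd (hvar k) (not_le.mpr hk)
  have hBV : BoundedVariationOn g (Set.Icc a b) :=
    ne_top_of_le_ne_top ENNReal.ofReal_ne_top hgvar
  refine ⟨hBV, ?_⟩
  intro φ hφ
  rcases eq_or_lt_of_le hab with rfl | hab'
  · -- degenerate case a = b
    have hdeg : ∀ (h : ℝ → ℝ) (m : ℕ) (t ξ : ℕ → ℝ), 0 < m → t 0 = a → t m = a →
        (∀ i < m, t i ≤ t (i + 1)) →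
        (∑ i ∈ Finset.range m, φ (ξ i) * (h (t (i + 1)) - h (t i))) = 0 := by
      intro h m t ξ hm h0 hb hmono
      refine Finset.sum_eq_zero fun i hi => ?_
      rw [Finset.mem_range] at hi
      have P : Part a a m t := ⟨hm, h0, hb, hmono⟩
      have e1 : t i = a := le_antisymm ((P.mem hi.le).2) ((P.mem hi.le).1)
      have e2 : t (i + 1) = a := le_antisymm ((P.mem hi).2) ((P.mem hi).1)
      rw [e1, e2]
      ring
    refine ⟨0, ?_, ?_⟩
    · intro ε hε
      refine ⟨1, one_pos, fun m t ξ hm h0 hb hmono _ _ => ?_⟩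
      rw [hdeg g m t ξ hm h0 hb hmono]
      simpa using hε
    · intro I hI
      have : ∀ k, I k = 0 := by
        intro k
        have h0 : ∀ ε > (0:ℝ), |I k| < ε := by
          intro ε hε
          obtain ⟨δ, hδ, H⟩ := hI k ε hε
          have := H 1 (fun _ => a) (fun _ => a) Nat.one_pos rfl rfl
            (fun i _ => le_rfl) (fun i _ => by simpa using hδ)
            (fun i _ => ⟨le_rfl, le_rfl⟩)
          rw [hdeg (f k) 1 (fun _ => a) (fun _ => a) Nat.one_pos rfl rfl
            (fun i _ => le_rfl)] at this
          simpa [abs_sub_comm] using this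
        by_contra hne
        exact absurd (h0 _ (abs_pos.mpr hne)) (lt_irrefl _)
      have hIeq : I = fun _ => 0 := funext this
      rw [hIeq]
      exact tendsto_const_nhds
  -- main case a < b
  set C' : ℝ := (ENNReal.ofReal C).toReal with hC'
  have hCf : ∀ k (n : ℕ) (s : ℕ → ℝ), Part a b n s →
      ∑ j ∈ Finset.range n, |f k (s (j + 1)) - f k (s j)| ≤ C' :=
    fun k n s P => sum_abs_le (f k) (hvar k) P
  have hCg : ∀ (n : ℕ) (s : ℕ → ℝ), Part a b n s →
      ∑ j ∈ Finset.range n, |g (s (j + 1)) - g (s j)| ≤ C' := by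
    intro n s P
    have hlim : Tendsto (fun k => ∑ j ∈ Finset.range n, |f k (s (j + 1)) - f k (s j)|)
        atTop (nhds (∑ j ∈ Finset.range n, |g (s (j + 1)) - g (s j)|)) := by
      apply tendsto_finset_sum
      intro j hj
      rw [Finset.mem_range] at hj
      exact ((hconv _ (P.mem hj)).sub (hconv _ (P.mem hj.le))).abs
    exact le_of_tendsto hlim (Filter.Eventually.of_forall fun k => hCf k n s P)
  have hC0 : 0 ≤ C' := C'_nonneg hab (f := g) hCg
  obtain ⟨J, hJ⟩ := exists_RS hab' φ g hCg hφ
  refine ⟨J, hJ, ?_⟩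
  intro I hI
  rw [Metric.tendsto_atTop]
  intro ε hε
  set ε' := ε / (8 * (C' + 1)) with hε'def
  have hε' : 0 < ε' := by positivity
  obtain ⟨δ₁, hδ₁, hosc⟩ := uc_of_continuousOn hφ ε' hε'
  obtain ⟨δ₂, hδ₂, hJ2⟩ := hJ (ε / 4) (by positivity)
  obtain ⟨N, hN⟩ := exists_nat_div_lt (c := b - a) (lt_min hδ₁ hδ₂)
  set u := unif a b (N + 1) with hu
  have PU : Part a b (N + 1) u := unif_part hab N.succ_pos
  have hmeshu1 : ∀ i < N + 1, u (i + 1) - u i < δ₁ := by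
    intro i _
    rw [hu, unif_step]
    push_cast
    exact lt_of_lt_of_le hN (min_le_left _ _)
  have hmeshu2 : ∀ i < N + 1, u (i + 1) - u i < δ₂ := by
    intro i _
    rw [hu, unif_step]
    push_cast
    exact lt_of_lt_of_le hN (min_le_right _ _)
  have htag : ∀ i < N + 1, u i ∈ Set.Icc (u i) (u (i + 1)) :=
    fun i hi => ⟨le_rfl, PU.mono i hi⟩
  have hSJ : |RS φ g (N + 1) u u - J| < ε / 4 := by
    simpa [RS] using hJ2 (N + 1) u u PU.pos PU.left PU.right PU.mono hmeshu2 htag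
  have hkI : ∀ k, |RS φ (f k) (N + 1) u u - I k| ≤ ε' * C' + ε / 4 := fun k =>
    RS_close_integral φ (f k) hab' u PU hε'.le (by positivity) hosc hmeshu1 htag (hCf k) (hI k)
  have hconvS : Tendsto (fun k => RS φ (f k) (N + 1) u u) atTop
      (nhds (RS φ g (N + 1) u u)) := by
    apply tendsto_finset_sum
    intro i hi
    rw [Finset.mem_range] at hi
    exact (((hconv _ (PU.mem hi)).sub (hconv _ (PU.mem hi.le))).const_mul _)
  obtain ⟨K, hK⟩ := Metric.tendsto_atTop.mp hconvS (ε / 4) (by positivity)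
  refine ⟨K, fun k hk => ?_⟩
  have h1 := hkI k
  have h2 := hK k hk
  rw [Real.dist_eq] at h2 ⊢
  have hε'C : ε' * C' ≤ ε / 8 := by
    rw [hε'def, div_mul_eq_mul_div, div_le_div_iff₀ (by positivity) (by norm_num)]
    nlinarith
  have t1 : |I k - J| ≤ |I k - RS φ (f k) (N + 1) u u| + |RS φ (f k) (N + 1) u u - J| :=
    abs_sub_le _ _ _
  have t2 : |RS φ (f k) (N + 1) u u - J|
      ≤ |RS φ (f k) (N + 1) u u - RS φ g (N + 1) u u| + |RS φ g (N + 1) u u - J| :=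
    abs_sub_le _ _ _
  have e1 : |I k - RS φ (f k) (N + 1) u u| ≤ ε' * C' + ε / 4 := by
    rwa [abs_sub_comm]
  linarith
end
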